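/- A monetary risk measure ρ on L^∞(P) is law-invariant (ρ(X) = ρ(Y) whenever X and Y have the same distribution under P) if and only if ρ is FSD-consistent (ρ(X) ≤ ρ(Y) whenever X first-order stochastically dominates Y). -/

import Mathlib

open MeasureTheory ProbabilityTheory Filter Set

/-- `X` belongs to `L^∞(P)`: measurable and essentially bounded. -/
def MemLinf {Ω : Type*} [MeasurableSpace Ω] (P : Measure Ω) (X : Ω → ℝ) : Prop :=
  Measurable X ∧ ∃ C : ℝ, ∀ᵐ ω ∂P, |X ω| ≤ C

/-- `X` first-order stochastically dominates `Y`: `E[f(X)] ≥ E[f(Y)]` for every bounded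
increasing `f : ℝ → ℝ`. -/
def FSD {Ω : Type*} [MeasurableSpace Ω] (P : Measure Ω) (X Y : Ω → ℝ) : Prop :=
  ∀ f : ℝ → ℝ, Monotone f → (∃ C : ℝ, ∀ x : ℝ, |f x| ≤ C) →
    ∫ ω, f (Y ω) ∂P ≤ ∫ ω, f (X ω) ∂P

/-- Truncated quantile function of a real measure. -/
noncomputable def quant (μ : Measure ℝ) (C : ℝ) (u : ℝ) : ℝ :=
  sInf ({x | x ∈ Icc (-C) C ∧ u ≤ cdf μ x} ∪ {C})

section QuantLemmas

variable {μ : Measure ℝ} {C u : ℝ}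

lemma quant_set_nonempty : ({x | x ∈ Icc (-C) C ∧ u ≤ cdf μ x} ∪ {C}).Nonempty :=
  ⟨C, Or.inr rfl⟩

lemma quant_set_bddBelow (hC : 0 ≤ C) :
    BddBelow ({x | x ∈ Icc (-C) C ∧ u ≤ cdf μ x} ∪ {C}) := by
  refine ⟨-C, ?_⟩
  rintro x (⟨⟨h1, _⟩, _⟩ | rfl)
  · exact h1
  · linarith

lemma quant_mem (hC : 0 ≤ C) : quant μ C u ∈ Icc (-C) C := by
  constructor
  · refine le_csInf quant_set_nonempty ?_
    rintro x (⟨⟨h1, _⟩, _⟩ | rfl)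
    · exact h1
    · linarith
  · exact csInf_le (quant_set_bddBelow hC) (Or.inr rfl)

lemma quant_mono (hC : 0 ≤ C) : Monotone (quant μ C) := by
  intro u v huv
  refine csInf_le_csInf (quant_set_bddBelow hC) quant_set_nonempty ?_
  rintro x (⟨hx, hvx⟩ | rfl)
  · exact Or.inl ⟨hx, huv.trans hvx⟩
  · exact Or.inr rfl

lemma le_cdf_quant (h1 : cdf μ C = 1) (hu1 : u < 1) :
    u ≤ cdf μ (quant μ C u) := by
  set m := quant μ C u with hm
  have key : ∀ s ∈ Ioi m, u ≤ cdf μ s := by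
    intro s hs
    obtain ⟨x, hx, hxs⟩ := exists_lt_of_csInf_lt quant_set_nonempty (show sInf _ < s from hs)
    have hux : u ≤ cdf μ x := by
      rcases hx with ⟨_, h⟩ | rfl
      · exact h
      · rw [h1]; exact hu1.le
    exact hux.trans (monotone_cdf μ hxs.le)
  have hrc : Tendsto (cdf μ) (nhdsWithin m (Ioi m)) (nhds (cdf μ m)) :=
    ((cdf μ).right_continuous m).mono Ioi_subset_Ici_self
  exact ge_of_tendsto hrc (eventually_nhdsWithin_of_forall key)

lemma quant_le_iff (h1 : cdf μ C = 1) (h0 : ∀ x : ℝ, x < -C → cdf μ x = 0)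
    (hC : 0 ≤ C) (hu0 : 0 < u) (hu1 : u < 1) {t : ℝ} :
    quant μ C u ≤ t ↔ u ≤ cdf μ t := by
  constructor
  · intro h
    exact (le_cdf_quant h1 hu1).trans (monotone_cdf μ h)
  · intro h
    by_cases hCt : C ≤ t
    · exact (quant_mem hC).2.trans hCt
    · have ht1 : -C ≤ t := by
        by_contra hc
        push_neg at hc
        rw [h0 t hc] at h
        linarith
      exact csInf_le (quant_set_bddBelow hC) (Or.inl ⟨⟨ht1, le_of_not_ge hCt⟩, h⟩)

end QuantLemmas

section MapLemmas

variable {Ω : Type*} [MeasurableSpace Ω] {P : Measure Ω} [IsProbabilityMeasure P]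

lemma cdf_map_one {X : Ω → ℝ} (hX : Measurable X) {C : ℝ}
    (hb : ∀ᵐ ω ∂P, |X ω| ≤ C) : cdf (P.map X) C = 1 := by
  have hprob : IsProbabilityMeasure (P.map X) := Measure.isProbabilityMeasure_map hX.aemeasurable
  rw [cdf_eq_real, measureReal_def]
  have h0 : P.map X (Ioi C) = 0 := by
    rw [Measure.map_apply hX measurableSet_Ioi]
    refine measure_mono_null ?_ (ae_iff.mp hb)
    intro ω hω
    simp only [mem_preimage, mem_Ioi] at hω
    simp only [mem_setOf_eq, not_le]
    exact lt_of_lt_of_le hω (le_abs_self _)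
  have : P.map X (Iic C) = 1 := by
    rw [← Set.compl_Ioi, prob_compl_eq_one_sub measurableSet_Ioi, h0, tsub_zero]
  rw [this, ENNReal.toReal_one]

lemma cdf_map_zero {X : Ω → ℝ} (hX : Measurable X) {C : ℝ}
    (hb : ∀ᵐ ω ∂P, |X ω| ≤ C) {x : ℝ} (hx : x < -C) : cdf (P.map X) x = 0 := by
  have hprob : IsProbabilityMeasure (P.map X) := Measure.isProbabilityMeasure_map hX.aemeasurable
  rw [cdf_eq_real, measureReal_def]
  have h0 : P.map X (Iic x) = 0 := by
    rw [Measure.map_apply hX measurableSet_Iic]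
    refine measure_mono_null ?_ (ae_iff.mp hb)
    intro ω hω
    simp only [mem_preimage, mem_Iic] at hω
    simp only [mem_setOf_eq, not_le]
    exact lt_of_lt_of_le (by linarith : C < -(X ω)) (neg_le_abs _)
  rw [h0, ENNReal.toReal_zero]

/-- Inverse transform sampling: the quantile of `μ = P.map X` composed with a uniform random
variable has distribution `μ`. -/
lemma map_quant {X U : Ω → ℝ} (hX : Measurable X) (hU : Measurable U)
    (hUd : P.map U = volume.restrict (Ioo (0 : ℝ) 1)) {C : ℝ}
    (hC : 0 ≤ C) (hb : ∀ᵐ ω ∂P, |X ω| ≤ C) :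
    P.map (fun ω => quant (P.map X) C (U ω)) = P.map X := by
  set μ := P.map X with hμ
  have hprob : IsProbabilityMeasure μ := Measure.isProbabilityMeasure_map hX.aemeasurable
  have h1 : cdf μ C = 1 := cdf_map_one hX hb
  have h0 : ∀ x : ℝ, x < -C → cdf μ x = 0 := fun x hx => cdf_map_zero hX hb hx
  have hqm : Measurable (quant μ C) := (quant_mono hC).measurable
  have hmeas : Measurable (fun ω => quant μ C (U ω)) := hqm.comp hU
  have hprob2 : IsProbabilityMeasure (P.map (fun ω => quant μ C (U ω))) :=
    Measure.isProbabilityMeasure_map hmeas.aemeasurable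
  refine Measure.ext_of_Iic _ _ (fun t => ?_)
  rw [Measure.map_apply hmeas measurableSet_Iic]
  have : (fun ω => quant μ C (U ω)) ⁻¹' Iic t = U ⁻¹' (quant μ C ⁻¹' Iic t) := rfl
  rw [this, ← Measure.map_apply hU (hqm measurableSet_Iic), hUd,
    Measure.restrict_apply' measurableSet_Ioo]
  have hsets : quant μ C ⁻¹' Iic t ∩ Ioo 0 1 = Iic (cdf μ t) ∩ Ioo 0 1 := by
    ext u
    simp only [mem_inter_iff, mem_preimage, mem_Iic, mem_Ioo]
    constructor
    · rintro ⟨h, hu0, hu1⟩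
      exact ⟨(quant_le_iff h1 h0 hC hu0 hu1).mp h, hu0, hu1⟩
    · rintro ⟨h, hu0, hu1⟩
      exact ⟨(quant_le_iff h1 h0 hC hu0 hu1).mpr h, hu0, hu1⟩
  rw [hsets]
  set p := cdf μ t with hp
  have hp0 : 0 ≤ p := cdf_nonneg μ t
  have hp1 : p ≤ 1 := cdf_le_one μ t
  have hvol : volume (Iic p ∩ Ioo (0:ℝ) 1) = ENNReal.ofReal p := by
    refine le_antisymm ?_ ?_
    · calc volume (Iic p ∩ Ioo (0:ℝ) 1) ≤ volume (Ioc 0 p) := by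
            refine measure_mono ?_
            rintro u ⟨hu, hu0, _⟩
            exact ⟨hu0, hu⟩
        _ = ENNReal.ofReal p := by rw [Real.volume_Ioc, sub_zero]
    · calc ENNReal.ofReal p = volume (Ioo (0:ℝ) p) := by rw [Real.volume_Ioo, sub_zero]
        _ ≤ volume (Iic p ∩ Ioo (0:ℝ) 1) := by
            refine measure_mono ?_
            rintro u ⟨hu0, hup⟩
            exact ⟨hup.le, hu0, lt_of_lt_of_le hup hp1⟩
  rw [hvol, hp, ofReal_cdf]

/-- FSD implies pointwise ordering of cdfs. -/
lemma cdf_le_of_fsd {X Y : Ω → ℝ} (hX : Measurable X) (hY : Measurable Y)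
    (h : FSD P X Y) (t : ℝ) : cdf (P.map X) t ≤ cdf (P.map Y) t := by
  have hprobX : IsProbabilityMeasure (P.map X) := Measure.isProbabilityMeasure_map hX.aemeasurable
  have hprobY : IsProbabilityMeasure (P.map Y) := Measure.isProbabilityMeasure_map hY.aemeasurable
  set f : ℝ → ℝ := (Ioi t).indicator (fun _ => 1) with hf
  have hfmono : Monotone f := by
    intro a b hab
    by_cases ha : a ∈ Ioi t
    · have hb : b ∈ Ioi t := lt_of_lt_of_le ha hab
      simp [hf, indicator_of_mem, ha, hb]
    · rw [hf, indicator_of_notMem ha]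
      exact indicator_nonneg (fun _ _ => zero_le_one) b
  have hfbdd : ∃ D : ℝ, ∀ x : ℝ, |f x| ≤ D := by
    refine ⟨1, fun x => ?_⟩
    rw [hf]
    by_cases hx : x ∈ Ioi t
    · rw [indicator_of_mem hx]; norm_num
    · rw [indicator_of_notMem hx]; norm_num
  have key := h f hfmono hfbdd
  have hintX : ∫ ω, f (X ω) ∂P = (P (X ⁻¹' Ioi t)).toReal := by
    have : (fun ω => f (X ω)) = (X ⁻¹' Ioi t).indicator (fun _ => (1:ℝ)) := by
      ext ω
      by_cases hω : t < X ω <;>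
        simp [hf, Set.indicator_apply, Set.mem_preimage, Set.mem_Ioi, hω]
    rw [this, integral_indicator_const (1:ℝ) (hX measurableSet_Ioi), smul_eq_mul, mul_one, measureReal_def]
  have hintY : ∫ ω, f (Y ω) ∂P = (P (Y ⁻¹' Ioi t)).toReal := by
    have : (fun ω => f (Y ω)) = (Y ⁻¹' Ioi t).indicator (fun _ => (1:ℝ)) := by
      ext ω
      by_cases hω : t < Y ω <;>
        simp [hf, Set.indicator_apply, Set.mem_preimage, Set.mem_Ioi, hω]
    rw [this, integral_indicator_const (1:ℝ) (hY measurableSet_Ioi), smul_eq_mul, mul_one, measureReal_def]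
  rw [hintX, hintY] at key
  have hcdfX : cdf (P.map X) t = 1 - (P (X ⁻¹' Ioi t)).toReal := by
    rw [cdf_eq_real, measureReal_def, Measure.map_apply hX measurableSet_Iic]
    have : X ⁻¹' Iic t = (X ⁻¹' Ioi t)ᶜ := by
      ext ω; simp [mem_preimage, not_lt]
    rw [this, prob_compl_eq_one_sub (hX measurableSet_Ioi),
      ENNReal.toReal_sub_of_le prob_le_one ENNReal.one_ne_top, ENNReal.toReal_one]
  have hcdfY : cdf (P.map Y) t = 1 - (P (Y ⁻¹' Ioi t)).toReal := by
    rw [cdf_eq_real, measureReal_def, Measure.map_apply hY measurableSet_Iic]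
    have : Y ⁻¹' Iic t = (Y ⁻¹' Ioi t)ᶜ := by
      ext ω; simp [mem_preimage, not_lt]
    rw [this, prob_compl_eq_one_sub (hY measurableSet_Ioi),
      ENNReal.toReal_sub_of_le prob_le_one ENNReal.one_ne_top, ENNReal.toReal_one]
  rw [hcdfX, hcdfY]
  linarith

end MapLemmas

/-- On a nonatomic probability space (one supporting a uniform random variable), a monetary
risk measure is law-invariant if and only if it is FSD-consistent. -/
theorem stmt12 {Ω : Type*} [MeasurableSpace Ω] (P : Measure Ω) [IsProbabilityMeasure P]
    (U : Ω → ℝ) (hU : Measurable U)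
    (hUd : P.map U = volume.restrict (Ioo (0 : ℝ) 1))
    (ρ : (Ω → ℝ) → ℝ)
    (hmono : ∀ X Y : Ω → ℝ, MemLinf P X → MemLinf P Y →
      (∀ᵐ ω ∂P, X ω ≤ Y ω) → ρ Y ≤ ρ X)
    (hTI : ∀ X : Ω → ℝ, MemLinf P X → ∀ m : ℝ, ρ (fun ω => X ω + m) = ρ X - m) :
    (∀ X Y : Ω → ℝ, MemLinf P X → MemLinf P Y → P.map X = P.map Y → ρ X = ρ Y)
    ↔ (∀ X Y : Ω → ℝ, MemLinf P X → MemLinf P Y → FSD P X Y → ρ X ≤ ρ Y) := by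
  constructor
  · -- law-invariant → FSD-consistent
    intro hLI X Y hXm hYm hFSD
    obtain ⟨hXmeas, CX, hCX⟩ := hXm
    obtain ⟨hYmeas, CY, hCY⟩ := hYm
    set C : ℝ := |CX| + |CY| + 1 with hCdef
    have hC : 0 ≤ C := by positivity
    have hbX : ∀ᵐ ω ∂P, |X ω| ≤ C := by
      filter_upwards [hCX] with ω hω
      have : CX ≤ |CX| := le_abs_self CX
      have : (0:ℝ) ≤ |CY| := abs_nonneg CY
      linarith [le_abs_self CX]
    have hbY : ∀ᵐ ω ∂P, |Y ω| ≤ C := by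
      filter_upwards [hCY] with ω hω
      linarith [le_abs_self CY, abs_nonneg CX]
    set μX := P.map X with hμX
    set μY := P.map Y with hμY
    set X' : Ω → ℝ := fun ω => quant μX C (U ω) with hX'
    set Y' : Ω → ℝ := fun ω => quant μY C (U ω) with hY'
    have hX'meas : Measurable X' := ((quant_mono hC).measurable).comp hU
    have hY'meas : Measurable Y' := ((quant_mono hC).measurable).comp hU
    have hX'mem : MemLinf P X' := by
      refine ⟨hX'meas, C, ae_of_all _ (fun ω => ?_)⟩
      have := quant_mem (μ := μX) (u := U ω) hC
      rw [abs_le]; exact ⟨this.1, this.2⟩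
    have hY'mem : MemLinf P Y' := by
      refine ⟨hY'meas, C, ae_of_all _ (fun ω => ?_)⟩
      have := quant_mem (μ := μY) (u := U ω) hC
      rw [abs_le]; exact ⟨this.1, this.2⟩
    have hmapX : P.map X' = P.map X := map_quant hXmeas hU hUd hC hbX
    have hmapY : P.map Y' = P.map Y := map_quant hYmeas hU hUd hC hbY
    have hcdf : ∀ t, cdf μX t ≤ cdf μY t := cdf_le_of_fsd hXmeas hYmeas hFSD
    have hle : ∀ ω, Y' ω ≤ X' ω := by
      intro ω
      refine csInf_le_csInf (quant_set_bddBelow hC) quant_set_nonempty ?_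
      rintro x (⟨hx, hux⟩ | rfl)
      · exact Or.inl ⟨hx, hux.trans (hcdf x)⟩
      · exact Or.inr rfl
    have h1 : ρ X = ρ X' := hLI X X' ⟨hXmeas, CX, hCX⟩ hX'mem hmapX.symm
    have h2 : ρ Y = ρ Y' := hLI Y Y' ⟨hYmeas, CY, hCY⟩ hY'mem hmapY.symm
    have h3 : ρ X' ≤ ρ Y' := hmono Y' X' hY'mem hX'mem (ae_of_all _ hle)
    rw [h1, h2]; exact h3
  · -- FSD-consistent → law-invariant
    intro hFSDc X Y hXm hYm hmap
    have hint : ∀ f : ℝ → ℝ, Monotone f →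
        ∫ ω, f (X ω) ∂P = ∫ ω, f (Y ω) ∂P := by
      intro f hf
      have hfm : Measurable f := hf.measurable
      rw [← integral_map hXm.1.aemeasurable hfm.aestronglyMeasurable,
        ← integral_map hYm.1.aemeasurable hfm.aestronglyMeasurable, hmap]
    have hFSDXY : FSD P X Y := fun f hf _ => le_of_eq (hint f hf).symm
    have hFSDYX : FSD P Y X := fun f hf _ => le_of_eq (hint f hf)
    exact le_antisymm (hFSDc X Y hXm hYm hFSDXY) (hFSDc Y X hYm hXm hFSDYX)
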